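/- Let M be a monoid of hypersubstitutions of L, let Σ be a set of identities of L, and let V be the variety defined by Σ. If V is M-solid, then an identity p = q is satisfied in every structure of V if and only if it is M-hyper-satisfied in every structure of V. -/

import Mathlib

open FirstOrder Language

universe u v w

/-- A hypersubstitution of `L` assigns to each `n`-ary function symbol of `L`
an `L`-term with variables in `Fin n`. -/
def Hypersub (L : FirstOrder.Language.{u, v}) : Type _ :=
  ∀ n : ℕ, L.Functions n → L.Term (Fin n)

variable {L : FirstOrder.Language.{u, v}}

/-- The extension `σ̂` of a hypersubstitution `σ` to all terms. -/
def Hypersub.apply (σ : Hypersub L) {α : Type w} : L.Term α → L.Term α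
  | Term.var x => Term.var x
  | Term.func f ts => Term.subst (σ _ f) (fun i => Hypersub.apply σ (ts i))

/-- The derived structure `A^σ`: same universe, each function symbol `f` is
interpreted by the term function of `σ f` in `A`. -/
def Hypersub.derive (σ : Hypersub L) {A : Type w} (S : L.Structure A) : L.Structure A :=
  letI := S
  { funMap := fun {n} f v => (σ n f).realize v
    RelMap := fun r v => Structure.RelMap r v }

/-- Realization of a term in an explicitly given structure. -/
def realizeIn {A : Type w} (S : L.Structure A) {α : Type*} (a : α → A) (t : L.Term α) : A :=
  letI := S
  t.realize a

/-- An identity `p = q` of `L` in `k` variables. -/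
structure Identity (L : FirstOrder.Language.{u, v}) : Type max u (v + 1) where
  k : ℕ
  lhs : L.Term (Fin k)
  rhs : L.Term (Fin k)

/-- Satisfaction of an identity in a structure. -/
def Identity.Satisfied (e : Identity L) {A : Type w} (S : L.Structure A) : Prop :=
  ∀ a : Fin e.k → A, realizeIn S a e.lhs = realizeIn S a e.rhs

/-- The identity `σ̂ p = σ̂ q`. -/
def Identity.hmap (σ : Hypersub L) (e : Identity L) : Identity L :=
  ⟨e.k, σ.apply e.lhs, σ.apply e.rhs⟩

/-- An identity is `M`-hyper-satisfied if `σ̂ p = σ̂ q` is satisfied for every `σ ∈ M`. -/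
def Identity.MHyperSatisfied (M : Set (Hypersub L)) (e : Identity L)
    {A : Type w} (S : L.Structure A) : Prop :=
  ∀ σ ∈ M, (e.hmap σ).Satisfied S

/-- The identity hypersubstitution `σ_id`, with `σ_id f = f(x₀, …, x_{n-1})`. -/
def Hypersub.id (L : FirstOrder.Language.{u, v}) : Hypersub L :=
  fun _n f => Term.func f (fun i => Term.var i)

/-- Composition of hypersubstitutions: `(σ ∘ ρ) f = σ̂ (ρ f)`. -/
def Hypersub.comp (σ ρ : Hypersub L) : Hypersub L :=
  fun n f => σ.apply (ρ n f)

/-- `M` is a monoid of hypersubstitutions: it contains the identity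
hypersubstitution and is closed under composition. -/
def IsHypersubMonoid (M : Set (Hypersub L)) : Prop :=
  Hypersub.id L ∈ M ∧ ∀ σ ∈ M, ∀ ρ ∈ M, σ.comp ρ ∈ M

theorem Hypersub.id_apply {α : Type w} (t : L.Term α) :
    (Hypersub.id L).apply t = t := by
  induction t with
  | var x => rfl
  | func f ts ih =>
      simp only [Hypersub.apply, Hypersub.id, Term.subst]
      exact congrArg _ (funext ih)

theorem realizeIn_derive {A : Type w} (S : L.Structure A) (σ : Hypersub L)
    {α : Type*} (a : α → A) (t : L.Term α) :
    realizeIn (Hypersub.derive σ S) a t = realizeIn S a (σ.apply t) := by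
  induction t with
  | var x => rfl
  | func f ts ih =>
      letI := S
      show (σ _ f).realize (fun i => realizeIn (Hypersub.derive σ S) a (ts i))
        = Term.realize a (Term.subst (σ _ f) fun i => σ.apply (ts i))
      rw [Term.realize_subst]
      exact congrArg (Term.realize · (σ _ f)) (funext ih)

/-- If the variety `V` defined by `Γ` is `M`-solid, then an
identity `e` is satisfied in every structure of `V` if and only if it is
`M`-hyper-satisfied in every structure of `V`. -/
theorem identity_M_solid_satisfied_iff_M_hyperSatisfied
    {L : FirstOrder.Language.{u, v}} [L.IsAlgebraic]
    (M : Set (Hypersub L)) (hM : IsHypersubMonoid M) (Γ : Set (Identity L))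
    (hsolid : ∀ (A : Type w) (S : L.Structure A), (∀ e' ∈ Γ, e'.Satisfied S) →
        ∀ σ ∈ M, ∀ e' ∈ Γ, e'.Satisfied (Hypersub.derive σ S))
    (e : Identity L) :
    (∀ (A : Type w) (S : L.Structure A), (∀ e' ∈ Γ, e'.Satisfied S) → e.Satisfied S) ↔
    (∀ (A : Type w) (S : L.Structure A), (∀ e' ∈ Γ, e'.Satisfied S) →
        e.MHyperSatisfied M S) := by
  constructor
  · intro h A S hS σ hσ a
    have hΓ' : ∀ e' ∈ Γ, e'.Satisfied (Hypersub.derive σ S) :=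
      fun e' he' => hsolid A S hS σ hσ e' he'
    have := h A (Hypersub.derive σ S) hΓ' a
    exact (realizeIn_derive S σ a e.lhs).symm.trans (this.trans (realizeIn_derive S σ a e.rhs))
  · intro h A S hS a
    have := h A S hS (Hypersub.id L) hM.1 a
    simpa [Identity.hmap, Hypersub.id_apply] using this
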